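/- Let H be the Heisenberg group of 3×3 unipotent upper triangular real matrices. The map 𝓑: H → H sending the matrix with entries (1 a b; 0 1 c; 0 0 1) to (1 0 c; 0 1 0; 0 0 1) is a Rota-Baxter operator on H, i.e. 𝓑(g)𝓑(h) = 𝓑(g·𝓑(g)h𝓑(g)⁻¹) for all g, h ∈ H. -/
import Mathlib


open Matrix

/-- On the Heisenberg group of unipotent upper-triangular 3×3 real matrices,
the map `𝓑 : (1 a b; 0 1 c; 0 0 1) ↦ (1 0 c; 0 1 0; 0 0 1)` is a Rota-Baxter
operator, i.e. `𝓑(g)𝓑(h) = 𝓑(g · 𝓑(g) h 𝓑(g)⁻¹)`. -/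
theorem rota_baxter_heisenberg_group
    (𝓑 : Matrix (Fin 3) (Fin 3) ℝ → Matrix (Fin 3) (Fin 3) ℝ)
    (h𝓑 : ∀ A : Matrix (Fin 3) (Fin 3) ℝ,
      𝓑 A = !![1, 0, A 1 2; 0, 1, 0; 0, 0, 1]) :
    ∀ A C : Matrix (Fin 3) (Fin 3) ℝ,
      A 0 0 = 1 → A 1 1 = 1 → A 2 2 = 1 → A 1 0 = 0 → A 2 0 = 0 → A 2 1 = 0 →
      C 0 0 = 1 → C 1 1 = 1 → C 2 2 = 1 → C 1 0 = 0 → C 2 0 = 0 → C 2 1 = 0 →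
      𝓑 A * 𝓑 C = 𝓑 (A * (𝓑 A * C * (𝓑 A)⁻¹)) := by
  intro A C a00 a11 a22 a10 a20 a21 c00 c11 c22 c10 c20 c21
  have hinv : (𝓑 A)⁻¹ = !![1, 0, -A 1 2; 0, 1, 0; 0, 0, 1] := by
    rw [h𝓑]
    apply inv_eq_right_inv
    ext i j
    fin_cases i <;> fin_cases j <;>
      simp [Matrix.mul_apply, Fin.sum_univ_three, Matrix.vecHead, Matrix.vecTail]
  rw [hinv, h𝓑 A, h𝓑 C, h𝓑 (A * _)]
  ext i j
  fin_cases i <;> fin_cases j <;>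
    simp [Matrix.mul_apply, Fin.sum_univ_three, Matrix.vecHead, Matrix.vecTail, Matrix.vecMul, dotProduct, a00, a11, a22, a10, a20, a21,
      c00, c11, c22, c10, c20, c21]
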